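/- arXiv:2604.09957 — 2 statements merged into one kernel-verified Lean document; each statement's English description precedes it below -/
import Mathlib

section
/- Let P and O be n×n complex matrices with P² = 1. Then for every real θ, exp(i(θ/2)P) · O · exp(-i(θ/2)P) = (O + P·O·P)/2 + cos(θ)·(O - P·O·P)/2 + sin(θ)·(i/2)·(P·O - O·P). In particular, the conjugated observable is an affine combination of cos θ and sin θ with θ-independent matrix coefficients. -/
open scoped Matrix
open NormedSpace

set_option maxHeartbeats 1000000 in
lemma exp_smul_I_of_sq_eq_one {n : ℕ} (P : Matrix (Fin n) (Fin n) ℂ)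
    (hP : P * P = 1) (z : ℂ) :
    NormedSpace.exp ((Complex.I * z) • P)
      = Complex.cos z • (1 : Matrix (Fin n) (Fin n) ℂ) + (Complex.I * Complex.sin z) • P := by
  have hP2 : P ^ 2 = 1 := by rw [sq, hP]
  have hPe : ∀ k, P ^ (2 * k) = 1 := fun k => by rw [pow_mul, hP2, one_pow]
  have hPo : ∀ k, P ^ (2 * k + 1) = P := fun k => by rw [pow_succ, hPe, one_mul]
  have hIe : ∀ k : ℕ, (Complex.I * z) ^ (2 * k) = (-1) ^ k * z ^ (2 * k) := fun k => by
    rw [mul_pow, pow_mul, Complex.I_sq, pow_mul]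
  have hIo : ∀ k : ℕ, (Complex.I * z) ^ (2 * k + 1) = Complex.I * ((-1) ^ k * z ^ (2 * k + 1)) :=
    fun k => by rw [pow_succ, hIe, pow_succ]; ring
  have heven : HasSum (fun k : ℕ => ((Nat.factorial (2 * k) : ℂ))⁻¹ • ((Complex.I * z) • P) ^ (2 * k))
      (Complex.cos z • (1 : Matrix (Fin n) (Fin n) ℂ)) := by
    have h := (Complex.hasSum_cos z).smul_const (1 : Matrix (Fin n) (Fin n) ℂ)
    convert h using 2 with k
    rw [smul_pow, hPe, hIe, smul_smul]
    congr 1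
    ring
  have hodd : HasSum (fun k : ℕ => ((Nat.factorial (2 * k + 1) : ℂ))⁻¹ • ((Complex.I * z) • P) ^ (2 * k + 1))
      ((Complex.I * Complex.sin z) • P) := by
    have h := ((Complex.hasSum_sin z).mul_left Complex.I).smul_const P
    convert h using 2 with k
    rw [smul_pow, hPo, hIo, smul_smul]
    congr 1
    ring
  have hsum := HasSum.even_add_odd
    (f := fun k : ℕ => ((Nat.factorial k : ℂ))⁻¹ • ((Complex.I * z) • P) ^ k) heven hodd
  rw [NormedSpace.exp_eq_tsum (𝕂 := ℂ)]
  exact hsum.tsum_eq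
/-- If `P` and `O` are `n × n` complex matrices with `P ^ 2 = 1`, then for every
real `θ`,
`exp (i(θ/2)P) * O * exp (-i(θ/2)P)
  = (O + P·O·P)/2 + cos θ • (O - P·O·P)/2 + sin θ • (i/2) • (P·O - O·P)`. -/
theorem conj_exp_of_sq_eq_one {n : ℕ} (P O : Matrix (Fin n) (Fin n) ℂ)
    (hP : P * P = 1) (θ : ℝ) :
    NormedSpace.exp ((Complex.I * (θ / 2 : ℂ)) • P) * O *
        NormedSpace.exp ((-(Complex.I * (θ / 2 : ℂ))) • P) =
      ((2 : ℂ)⁻¹) • (O + P * O * P)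
        + (Real.cos θ : ℂ) • (((2 : ℂ)⁻¹) • (O - P * O * P))
        + (Real.sin θ : ℂ) • ((Complex.I / 2) • (P * O - O * P)) := by
  have h1 := exp_smul_I_of_sq_eq_one P hP ((θ : ℂ) / 2)
  have h2 := exp_smul_I_of_sq_eq_one P hP (-((θ : ℂ) / 2))
  have hneg : (-(Complex.I * ((θ : ℂ) / 2))) • P = (Complex.I * (-((θ : ℂ) / 2))) • P := by
    ring_nf
  rw [h1, hneg, h2, Complex.cos_neg, Complex.sin_neg]
  have hcos : (Real.cos θ : ℂ) = Complex.cos ((θ : ℂ) / 2) ^ 2 - Complex.sin ((θ : ℂ) / 2) ^ 2 := by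
    rw [Complex.ofReal_cos]
    rw [show (θ : ℂ) = 2 * ((θ : ℂ) / 2) by ring, Complex.cos_two_mul']
    ring_nf
  have hsin : (Real.sin θ : ℂ) = 2 * Complex.sin ((θ : ℂ) / 2) * Complex.cos ((θ : ℂ) / 2) := by
    rw [Complex.ofReal_sin]
    rw [show (θ : ℂ) = 2 * ((θ : ℂ) / 2) by ring, Complex.sin_two_mul]; ring_nf
  have hpyth : Complex.sin ((θ : ℂ) / 2) ^ 2 + Complex.cos ((θ : ℂ) / 2) ^ 2 = 1 :=
    Complex.sin_sq_add_cos_sq _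
  rw [hcos, hsin]
  set C := Complex.cos ((θ : ℂ) / 2)
  set S := Complex.sin ((θ : ℂ) / 2)
  simp only [mul_add, add_mul, mul_sub, sub_mul, Matrix.smul_mul, Matrix.mul_smul,
    Matrix.one_mul, Matrix.mul_one, smul_smul, mul_neg, neg_smul, smul_sub, smul_add]
  match_scalars
  · linear_combination hpyth / 2
  · ring
  · ring
  · linear_combination hpyth / 2 - S ^ 2 * Complex.I_sq
end

section
/- Let a, b, c be real numbers and define f : ℝ → ℝ by f(θ) = a + b·cos θ + c·sin θ. Then for every θ, the derivative of f satisfies f'(θ) = (f(θ + π/2) - f(θ - π/2))/2. -/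
open Real

/-- **parameter-shift rule.** For `f θ = a + b cos θ + c sin θ`, the derivative
satisfies `f' θ = (f (θ + π/2) - f (θ - π/2)) / 2` for every `θ`. -/
theorem parameter_shift_rule (a b c : ℝ) (θ : ℝ) :
    deriv (fun θ : ℝ => a + b * Real.cos θ + c * Real.sin θ) θ =
      ((a + b * Real.cos (θ + π / 2) + c * Real.sin (θ + π / 2))
        - (a + b * Real.cos (θ - π / 2) + c * Real.sin (θ - π / 2))) / 2 := by
  have h : HasDerivAt (fun θ : ℝ => a + b * Real.cos θ + c * Real.sin θ)
      (b * (-Real.sin θ) + c * Real.cos θ) θ := by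
    simpa using ((hasDerivAt_const θ a).fun_add ((Real.hasDerivAt_cos θ).const_mul b)).fun_add
      ((Real.hasDerivAt_sin θ).const_mul c)
  rw [h.deriv, Real.cos_add, Real.sin_add, Real.cos_sub, Real.sin_sub,
    Real.cos_pi_div_two, Real.sin_pi_div_two]
  ring
end
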